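/- Let A be an n×n complex matrix, regarded as a linear endomorphism of ℂⁿ. Then for x ∈ ℂⁿ, exp(tA) x → 0 as t → −∞ if and only if x belongs to the sum of the maximal generalized eigenspaces ⨆_{λ : Re λ > 0} ker((A − λI)ⁿ) of A over eigenvalues λ with positive real part. That is, the unstable subspace E^u, defined dynamically as the set of initial conditions whose trajectories under ẋ = Ax converge to the origin as t → −∞, equals the span of the generalized eigenvectors of A corresponding to eigenvalues with positive real part. -/

import Mathlib

open Filter Polynomial NormedSpace Module
open scoped BigOperators Matrix Nat DirectSum


/-- A real polynomial whose values tend to `0` at `-∞` is zero. -/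
theorem poly_eq_zero_of_tendsto_atBot {p : ℝ[X]}
    (h : Tendsto (fun t : ℝ => p.eval t) atBot (nhds 0)) : p = 0 := by
  set q : ℝ[X] := p.comp (-X) with hq
  have hqe : ∀ t : ℝ, q.eval t = p.eval (-t) := by
    intro t; simp [hq, eval_comp]
  have hq0 : Tendsto (fun t : ℝ => q.eval t) atTop (nhds 0) := by
    have := h.comp tendsto_neg_atTop_atBot
    simpa [hqe, Function.comp_def] using this
  have hlc : q.leadingCoeff = 0 := ((Polynomial.tendsto_nhds_iff q).mp hq0).1
  have hq' : q = 0 := leadingCoeff_eq_zero.mp hlc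
  have : p = q.comp (-X) := by
    rw [hq, comp_assoc]
    simp
  rw [this, hq', zero_comp]

/-- If a complex polynomial expression in a real variable tends to 0 at `-∞`,
all its coefficients vanish. -/
theorem coeff_eq_zero_of_tendsto_atBot {m : ℕ} {c : ℕ → ℂ}
    (h : Tendsto (fun t : ℝ => ∑ k ∈ Finset.range m, (t : ℂ) ^ k * c k) atBot (nhds 0)) :
    ∀ k < m, c k = 0 := by
  have key : ∀ d : ℂ →L[ℝ] ℝ, ∀ k < m, d (c k) = 0 := by
    intro d k hk
    have hre : Tendsto (fun t : ℝ => ∑ j ∈ Finset.range m, t ^ j * d (c j)) atBot (nhds 0) := by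
      have := (d.continuous.tendsto 0).comp h
      simp only [Function.comp, map_zero] at this
      refine this.congr fun t => ?_
      show d (∑ j ∈ Finset.range m, (t : ℂ) ^ j * c j) = _
      rw [map_sum]
      refine Finset.sum_congr rfl fun j _ => ?_
      have h1 : (t : ℂ) ^ j * c j = (t ^ j : ℝ) • c j := by
        rw [Complex.real_smul]; push_cast; ring
      rw [h1, ContinuousLinearMap.map_smul]
      simp [smul_eq_mul]
    set P : ℝ[X] := ∑ j ∈ Finset.range m, C (d (c j)) * X ^ j with hP
    have hPe : ∀ t : ℝ, P.eval t = ∑ j ∈ Finset.range m, t ^ j * d (c j) := by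
      intro t
      rw [hP, eval_finset_sum]
      refine Finset.sum_congr rfl fun j _ => ?_
      rw [eval_mul, eval_C, eval_pow, eval_X, mul_comm]
    have hP0 : P = 0 := poly_eq_zero_of_tendsto_atBot (by simpa only [hPe] using hre)
    have := congrArg (fun Q : ℝ[X] => Q.coeff k) hP0
    simpa [hP, coeff_X_pow, Finset.sum_ite_eq', hk] using this
  intro k hk
  exact Complex.ext ((key Complex.reCLM k) hk) ((key Complex.imCLM k) hk)


/-- `e^{ct} |t|^k → 0` as `t → -∞` when `c > 0`. -/
theorem tendsto_exp_mul_abs_pow_atBot {c : ℝ} (hc : 0 < c) (k : ℕ) :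
    Tendsto (fun t : ℝ => Real.exp (t * c) * |t| ^ k) atBot (nhds 0) := by
  have h1 : Tendsto (fun s : ℝ => c * s) atTop atTop :=
    Tendsto.const_mul_atTop hc tendsto_id
  have h2 : Tendsto (fun s : ℝ => (c * s) ^ k * Real.exp (-(c * s))) atTop (nhds 0) :=
    (Real.tendsto_pow_mul_exp_neg_atTop_nhds_zero k).comp h1
  have h3 : Tendsto (fun s : ℝ => (c⁻¹) ^ k * ((c * s) ^ k * Real.exp (-(c * s))))
      atTop (nhds 0) := by
    simpa using h2.const_mul ((c⁻¹) ^ k)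
  have h4 : Tendsto (fun t : ℝ => (c⁻¹) ^ k * ((c * (-t)) ^ k * Real.exp (-(c * (-t)))))
      atBot (nhds 0) := h3.comp tendsto_neg_atBot_atTop
  refine (h4.congr' ?_)
  filter_upwards [eventually_le_atBot 0] with t ht
  have hct : -(c * -t) = t * c := by ring
  have habs : |t| = -t := abs_of_nonpos ht
  rw [hct, habs]
  have h5 : c⁻¹ ^ k * (c * -t) ^ k = (-t) ^ k := by
    rw [← mul_pow, ← mul_assoc, inv_mul_cancel₀ hc.ne', one_mul]
  rw [← mul_assoc, h5, mul_comm]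

namespace UnstableAux

variable {n : ℕ}

/-- `mulVec` by a fixed vector, as a continuous linear map in the matrix. -/
noncomputable def mulVecCLM (v : Fin n → ℂ) : Matrix (Fin n) (Fin n) ℂ →L[ℂ] (Fin n → ℂ) :=
  LinearMap.toContinuousLinearMap
  { toFun := fun M => M.mulVec v
    map_add' := fun M N => Matrix.add_mulVec M N v
    map_smul' := fun c M => (Matrix.smul_mulVec c M v) }

@[simp] lemma mulVecCLM_apply (v : Fin n → ℂ) (M : Matrix (Fin n) (Fin n) ℂ) :
    mulVecCLM v M = M.mulVec v := rfl

lemma exp_smul_one (z : ℂ) :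
    exp (z • (1 : Matrix (Fin n) (Fin n) ℂ)) = Complex.exp z • 1 := by
  letI : SeminormedRing (Matrix (Fin n) (Fin n) ℂ) := Matrix.linftyOpSemiNormedRing
  letI : NormedRing (Matrix (Fin n) (Fin n) ℂ) := Matrix.linftyOpNormedRing
  letI : NormedAlgebra ℂ (Matrix (Fin n) (Fin n) ℂ) := Matrix.linftyOpNormedAlgebra
  show exp (z • (1 : Matrix (Fin n) (Fin n) ℂ)) = Complex.exp z • 1
  rw [Matrix.smul_one_eq_diagonal, Matrix.exp_diagonal, Matrix.smul_one_eq_diagonal,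
    Pi.exp_def, Complex.exp_eq_exp_ℂ]

lemma exp_mulVec_eq_sum (N : Matrix (Fin n) (Fin n) ℂ) (v : Fin n → ℂ)
    (hv : (N ^ n).mulVec v = 0) (t : ℝ) :
    (exp ((t : ℂ) • N)).mulVec v =
      ∑ k ∈ Finset.range n, ((t : ℂ) ^ k * (k ! : ℂ)⁻¹) • (N ^ k).mulVec v := by
  have hker : ∀ k, n ≤ k → (N ^ k).mulVec v = 0 := by
    intro k hk
    have h : N ^ k = N ^ (k - n) * N ^ n := by
      rw [← pow_add, Nat.sub_add_cancel hk]
    rw [h, ← Matrix.mulVec_mulVec, hv, Matrix.mulVec_zero]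
  letI : SeminormedRing (Matrix (Fin n) (Fin n) ℂ) := Matrix.linftyOpSemiNormedRing
  letI : NormedRing (Matrix (Fin n) (Fin n) ℂ) := Matrix.linftyOpNormedRing
  letI : NormedAlgebra ℂ (Matrix (Fin n) (Fin n) ℂ) := Matrix.linftyOpNormedAlgebra
  show (exp ((t : ℂ) • N)).mulVec v = _
  have hsummable : Summable fun k : ℕ => (k !⁻¹ : ℂ) • ((t : ℂ) • N) ^ k :=
    expSeries_summable' ((t : ℂ) • N)
  calc (exp ((t : ℂ) • N)).mulVec v
      = mulVecCLM v (∑' k : ℕ, (k !⁻¹ : ℂ) • ((t : ℂ) • N) ^ k) := by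
        rw [exp_eq_tsum ℂ]; rfl
    _ = ∑' k : ℕ, mulVecCLM v ((k !⁻¹ : ℂ) • ((t : ℂ) • N) ^ k) :=
        (mulVecCLM v).map_tsum hsummable
    _ = ∑' k : ℕ, ((t : ℂ) ^ k * (k ! : ℂ)⁻¹) • (N ^ k).mulVec v := by
        refine tsum_congr fun k => ?_
        rw [_root_.smul_pow, map_smul, map_smul, mulVecCLM_apply, smul_smul, mul_comm]
    _ = ∑ k ∈ Finset.range n, ((t : ℂ) ^ k * (k ! : ℂ)⁻¹) • (N ^ k).mulVec v := by
        refine tsum_eq_sum fun k hk => ?_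
        rw [hker k (by simpa using hk), smul_zero]

/-- Key formula: on a generalized eigenvector, `exp(tA)` acts as
`e^{tc}` times a polynomial in `t`. -/
theorem exp_smul_mulVec (A : Matrix (Fin n) (Fin n) ℂ) (c : ℂ) (v : Fin n → ℂ)
    (hv : ((A - c • 1) ^ n).mulVec v = 0) (t : ℝ) :
    (exp ((t : ℂ) • A)).mulVec v =
      Complex.exp ((t : ℂ) * c) •
        ∑ k ∈ Finset.range n,
          ((t : ℂ) ^ k * (k ! : ℂ)⁻¹) • ((A - c • 1) ^ k).mulVec v := by
  set N : Matrix (Fin n) (Fin n) ℂ := A - c • 1 with hN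
  have hsplit : (t : ℂ) • A = ((t : ℂ) * c) • (1 : Matrix (Fin n) (Fin n) ℂ) + (t : ℂ) • N := by
    rw [hN, smul_sub, smul_smul]; abel
  have hcomm : Commute (((t : ℂ) * c) • (1 : Matrix (Fin n) (Fin n) ℂ)) ((t : ℂ) • N) :=
    ((Commute.one_left _).smul_left _).smul_right _
  have hmain : exp ((t : ℂ) • A)
      = Complex.exp ((t : ℂ) * c) • exp ((t : ℂ) • N) := by
    rw [hsplit, Matrix.exp_add_of_commute _ _ hcomm, exp_smul_one, smul_mul_assoc, one_mul]
  rw [hmain, Matrix.smul_mulVec, exp_mulVec_eq_sum N v hv t]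




lemma toLin'_pow_sub_smul (A : Matrix (Fin n) (Fin n) ℂ) (c : ℂ) (k : ℕ) :
    Matrix.toLin' ((A - c • 1) ^ k)
      = (Matrix.toLin' A - c • (1 : Module.End ℂ (Fin n → ℂ))) ^ k := by
  have h : Matrix.toLin' (A - c • 1)
      = Matrix.toLin' A - c • (1 : Module.End ℂ (Fin n → ℂ)) := by
    rw [map_sub, map_smul]
    congr 1
    · congr 1
      exact Matrix.toLin'_one
  rw [← h]
  exact map_pow Matrix.toLinAlgEquiv' _ k

lemma mem_ker_iff (A : Matrix (Fin n) (Fin n) ℂ) (c : ℂ) (v : Fin n → ℂ) :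
    v ∈ LinearMap.ker (Matrix.toLin' ((A - c • 1) ^ n))
      ↔ ((A - c • 1) ^ n).mulVec v = 0 := by
  rw [LinearMap.mem_ker, Matrix.toLin'_apply]

lemma ker_eq_maxGenEigenspace (A : Matrix (Fin n) (Fin n) ℂ) (c : ℂ) :
    LinearMap.ker (Matrix.toLin' ((A - c • 1) ^ n))
      = Module.End.maxGenEigenspace (Matrix.toLin' A : Module.End ℂ (Fin n → ℂ)) c := by
  rw [Module.End.maxGenEigenspace_eq_genEigenspace_finrank,
    (by simp : finrank ℂ (Fin n → ℂ) = n), Module.End.genEigenspace_nat,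
    toLin'_pow_sub_smul]


/-- Forward decay on generalized eigenspaces with positive real part. -/
theorem tendsto_exp_mulVec_of_pos (A : Matrix (Fin n) (Fin n) ℂ) {c : ℂ} (hc : 0 < c.re)
    (v : Fin n → ℂ) (hv : ((A - c • 1) ^ n).mulVec v = 0) :
    Tendsto (fun t : ℝ => (exp ((t : ℂ) • A)).mulVec v) atBot (nhds 0) := by
  set w : ℕ → (Fin n → ℂ) := fun k => ((A - c • 1) ^ k).mulVec v with hw
  have hb : ∀ t : ℝ, ‖(exp ((t : ℂ) • A)).mulVec v‖
      ≤ ∑ k ∈ Finset.range n, Real.exp (t * c.re) * |t| ^ k * ((k ! : ℝ)⁻¹ * ‖w k‖) := by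
    intro t
    rw [exp_smul_mulVec A c v hv t, norm_smul, Complex.norm_exp]
    have h1 : ((t : ℂ) * c).re = t * c.re := by simp
    rw [h1]
    have h2 : ∀ k, ‖((t : ℂ) ^ k * (k ! : ℂ)⁻¹) • w k‖ = |t| ^ k * ((k ! : ℝ)⁻¹ * ‖w k‖) := by
      intro k
      rw [norm_smul, norm_mul, norm_pow, norm_inv, Complex.norm_real, Real.norm_eq_abs,
        Complex.norm_natCast, mul_assoc]
    calc Real.exp (t * c.re) * ‖∑ k ∈ Finset.range n, ((t : ℂ) ^ k * (k ! : ℂ)⁻¹) • w k‖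
        ≤ Real.exp (t * c.re) * ∑ k ∈ Finset.range n, |t| ^ k * ((k ! : ℝ)⁻¹ * ‖w k‖) := by
          refine mul_le_mul_of_nonneg_left ?_ (Real.exp_pos _).le
          refine (norm_sum_le _ _).trans ?_
          exact le_of_eq (Finset.sum_congr rfl fun k _ => h2 k)
      _ = ∑ k ∈ Finset.range n, Real.exp (t * c.re) * |t| ^ k * ((k ! : ℝ)⁻¹ * ‖w k‖) := by
          rw [Finset.mul_sum]
          exact Finset.sum_congr rfl fun k _ => by ring
  refine squeeze_zero_norm hb ?_
  have : (0 : ℝ) = ∑ k ∈ Finset.range n, 0 := by simp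
  rw [this]
  refine tendsto_finset_sum _ fun k _ => ?_
  simpa using (tendsto_exp_mul_abs_pow_atBot hc k).mul_const ((k ! : ℝ)⁻¹ * ‖w k‖)

/-- Rigidity: a generalized eigenvector for eigenvalue with nonpositive real part
whose trajectory decays backwards in time must be zero. -/
theorem eq_zero_of_tendsto_nonpos (A : Matrix (Fin n) (Fin n) ℂ) {c : ℂ} (hc : c.re ≤ 0)
    (v : Fin n → ℂ) (hv : ((A - c • 1) ^ n).mulVec v = 0)
    (h : Tendsto (fun t : ℝ => (exp ((t : ℂ) • A)).mulVec v) atBot (nhds 0)) :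
    v = 0 := by
  rcases Nat.eq_zero_or_pos n with hn | hn
  · subst hn; ext i; exact absurd i.2 (by simp)
  set w : ℕ → (Fin n → ℂ) := fun k => ((A - c • 1) ^ k).mulVec v with hw
  set S : ℝ → (Fin n → ℂ) :=
    fun t => ∑ k ∈ Finset.range n, ((t : ℂ) ^ k * (k ! : ℂ)⁻¹) • w k with hS
  have hSle : ∀ᶠ t : ℝ in atBot, ‖S t‖ ≤ ‖(exp ((t : ℂ) • A)).mulVec v‖ := by
    filter_upwards [eventually_le_atBot (0 : ℝ)] with t ht
    rw [exp_smul_mulVec A c v hv t, norm_smul, Complex.norm_exp]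
    have h1 : ((t : ℂ) * c).re = t * c.re := by simp
    rw [h1]
    have h2 : (1 : ℝ) ≤ Real.exp (t * c.re) := by
      rw [Real.one_le_exp_iff]
      nlinarith
    nlinarith [norm_nonneg (S t), Real.exp_pos (t * c.re)]
  have hSnorm : Tendsto (fun t : ℝ => ‖S t‖) atBot (nhds 0) := by
    have hup : Tendsto (fun t : ℝ => ‖(exp ((t : ℂ) • A)).mulVec v‖) atBot (nhds 0) := by
      simp only [← norm_zero (E := Fin n → ℂ)]
      exact h.norm
    refine tendsto_of_tendsto_of_tendsto_of_le_of_le' tendsto_const_nhds hup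
      (Eventually.of_forall fun t => norm_nonneg _) hSle
  have hcoord : ∀ i : Fin n, v i = 0 := by
    intro i
    have hSi : Tendsto (fun t : ℝ => S t i) atBot (nhds 0) :=
      squeeze_zero_norm (fun t => norm_le_pi_norm (S t) i) hSnorm
    have hSi' : Tendsto (fun t : ℝ =>
        ∑ k ∈ Finset.range n, (t : ℂ) ^ k * ((k ! : ℂ)⁻¹ * w k i)) atBot (nhds 0) := by
      refine hSi.congr fun t => ?_
      rw [hS]
      simp only [Finset.sum_apply, Pi.smul_apply, smul_eq_mul]
      exact Finset.sum_congr rfl fun k _ => by ring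
    have h0 := coeff_eq_zero_of_tendsto_atBot hSi' 0 hn
    simp only [Nat.factorial_zero, Nat.cast_one, inv_one, one_mul] at h0
    have hw0 : w 0 = v := by
      rw [hw]; simp [Matrix.one_mulVec]
    rw [hw0] at h0
    exact h0
  ext i; exact hcoord i


end UnstableAux

open UnstableAux

/-- Dynamical characterization of the unstable subspace of `ẋ = Ax`:
`exp(tA)x → 0` as `t → −∞` iff `x` lies in the sum of the maximal generalized
eigenspaces of `A` over eigenvalues with positive real part. -/
theorem unstable_subspace_eq_sum_generalized_eigenspaces {n : ℕ}
    (A : Matrix (Fin n) (Fin n) ℂ) (x : Fin n → ℂ) :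
    Filter.Tendsto (fun t : ℝ => (NormedSpace.exp ((t : ℂ) • A)).mulVec x)
        Filter.atBot (nhds 0)
      ↔ x ∈ ⨆ lam : {μ : ℂ // 0 < μ.re},
          LinearMap.ker (Matrix.toLin' ((A - (lam : ℂ) • 1) ^ n)) := by
  classical
  set E : ℂ → Submodule ℂ (Fin n → ℂ) :=
    fun μ => Module.End.maxGenEigenspace (Matrix.toLin' A : Module.End ℂ (Fin n → ℂ)) μ with hE
  have hmem : ∀ (μ : ℂ) (v : Fin n → ℂ), v ∈ E μ ↔ ((A - μ • 1) ^ n).mulVec v = 0 := by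
    intro μ v
    show v ∈ Module.End.maxGenEigenspace (Matrix.toLin' A : Module.End ℂ (Fin n → ℂ)) μ ↔ _
    rw [← ker_eq_maxGenEigenspace, mem_ker_iff]
  have hiSup : (⨆ lam : {μ : ℂ // 0 < μ.re},
      LinearMap.ker (Matrix.toLin' ((A - (lam : ℂ) • 1) ^ n)))
      = ⨆ lam : {μ : ℂ // 0 < μ.re}, E (lam : ℂ) := by
    exact iSup_congr fun lam => ker_eq_maxGenEigenspace A lam
  rw [hiSup]
  constructor
  · -- hard direction
    intro hx
    have hInd : iSupIndep E :=
      Module.End.independent_maxGenEigenspace (Matrix.toLin' A : Module.End ℂ (Fin n → ℂ))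
    have hTop : (⨆ μ, E μ) = ⊤ :=
      Module.End.iSup_maxGenEigenspace_eq_top (Matrix.toLin' A : Module.End ℂ (Fin n → ℂ))
    have hInt : DirectSum.IsInternal E :=
      DirectSum.isInternal_submodule_of_iSupIndep_of_iSup_eq_top hInd hTop
    set e : (⨁ μ : ℂ, E μ) ≃ₗ[ℂ] (Fin n → ℂ) :=
      LinearEquiv.ofBijective (DirectSum.coeLinearMap E) hInt with he
    set π : ℂ → ((Fin n → ℂ) →ₗ[ℂ] (Fin n → ℂ)) :=
      fun μ => (E μ).subtype ∘ₗ (DirectSum.component ℂ ℂ (fun ν => E ν) μ) ∘ₗ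
        (e.symm : (Fin n → ℂ) →ₗ[ℂ] (⨁ μ : ℂ, E μ)) with hπ
    have hπ_apply : ∀ (μ : ℂ) (v : Fin n → ℂ), π μ v = ((e.symm v) μ : Fin n → ℂ) := by
      intro μ v; rfl
    have hπ_same : ∀ (μ : ℂ) (v : Fin n → ℂ), v ∈ E μ → π μ v = v := by
      intro μ v hv
      rw [hπ_apply, hInt.ofBijective_coeLinearMap_of_mem hv]
    have hπ_ne : ∀ (μ ν : ℂ), μ ≠ ν → ∀ v ∈ E μ, π ν v = 0 := by
      intro μ ν hμν v hv
      rw [hπ_apply, hInt.ofBijective_coeLinearMap_of_mem_ne hμν hv]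
      rfl
    have hπ_mem : ∀ (μ : ℂ) (v : Fin n → ℂ), π μ v ∈ E μ := by
      intro μ v
      rw [hπ_apply]
      exact ((e.symm v) μ).2
    -- invariance of each E μ under exp(tA)
    have hinv : ∀ (t : ℝ) (μ : ℂ), ∀ v ∈ E μ, (NormedSpace.exp ((t : ℂ) • A)).mulVec v ∈ E μ := by
      intro t μ v hv
      rw [hmem] at hv ⊢
      rw [exp_smul_mulVec A μ v hv t]
      have L := Matrix.mulVecLin ((A - μ • 1) ^ n)
      show Matrix.mulVecLin ((A - μ • 1) ^ n) _ = 0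
      rw [map_smul, map_sum]
      have hterm : ∀ k ∈ Finset.range n,
          Matrix.mulVecLin ((A - μ • 1) ^ n)
            (((t : ℂ) ^ k * (k ! : ℂ)⁻¹) • ((A - μ • 1) ^ k).mulVec v) = 0 := by
        intro k _
        rw [map_smul]
        have : ((A - μ • 1) ^ n).mulVec (((A - μ • 1) ^ k).mulVec v) = 0 := by
          rw [Matrix.mulVec_mulVec, ← pow_add, add_comm, pow_add, ← Matrix.mulVec_mulVec, hv,
            Matrix.mulVec_zero]
        show ((t : ℂ) ^ k * (k ! : ℂ)⁻¹) • ((A - μ • 1) ^ n).mulVec (((A - μ • 1) ^ k).mulVec v)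
          = 0
        rw [this, smul_zero]
      rw [Finset.sum_congr rfl hterm]
      simp
    -- exp(tA) commutes with π μ
    have hcomm : ∀ (t : ℝ) (μ : ℂ) (v : Fin n → ℂ),
        π μ ((NormedSpace.exp ((t : ℂ) • A)).mulVec v)
          = (NormedSpace.exp ((t : ℂ) • A)).mulVec (π μ v) := by
      intro t μ v
      have hv : v ∈ ⨆ ν, E ν := hTop ▸ Submodule.mem_top
      refine Submodule.iSup_induction (motive := fun v =>
          π μ ((NormedSpace.exp ((t : ℂ) • A)).mulVec v)
          = (NormedSpace.exp ((t : ℂ) • A)).mulVec (π μ v)) E hv ?_ ?_ ?_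
      · intro ν w hw
        by_cases hνμ : ν = μ
        · subst hνμ
          rw [hπ_same ν _ (hinv t ν w hw), hπ_same ν w hw]
        · rw [hπ_ne ν μ hνμ _ (hinv t ν w hw), hπ_ne ν μ hνμ w hw, Matrix.mulVec_zero]
      · show π μ ((NormedSpace.exp ((t : ℂ) • A)).mulVec 0)
          = (NormedSpace.exp ((t : ℂ) • A)).mulVec (π μ 0)
        simp [Matrix.mulVec_zero]
      · intro a b ha hb
        show π μ ((NormedSpace.exp ((t : ℂ) • A)).mulVec (a + b))
          = (NormedSpace.exp ((t : ℂ) • A)).mulVec (π μ (a + b))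
        rw [Matrix.mulVec_add, map_add, ha, hb, map_add, Matrix.mulVec_add]
    -- each projected trajectory tends to zero
    have hproj : ∀ μ : ℂ, Tendsto
        (fun t : ℝ => (NormedSpace.exp ((t : ℂ) • A)).mulVec (π μ x)) atBot (nhds 0) := by
      intro μ
      have hcont : Continuous (π μ) := (π μ).continuous_of_finiteDimensional
      have := (hcont.tendsto 0).comp hx
      rw [map_zero] at this
      refine this.congr fun t => ?_
      exact hcomm t μ x
    -- components with nonpositive real part vanish
    have hzero : ∀ μ : ℂ, μ.re ≤ 0 → π μ x = 0 := by
      intro μ hμ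
      exact eq_zero_of_tendsto_nonpos A hμ (π μ x) ((hmem μ _).mp (hπ_mem μ x)) (hproj μ)
    -- decompose x
    have hx_eq : x = ∑ μ ∈ (e.symm x).support, ((e.symm x) μ : Fin n → ℂ) := by
      conv_lhs => rw [← e.apply_symm_apply x]
      show DirectSum.coeLinearMap E (e.symm x) = _
      rw [DirectSum.coeLinearMap_eq_dfinsuppSum]
      rfl
    rw [hx_eq]
    refine Submodule.sum_mem _ fun μ hμ => ?_
    by_cases hpos : 0 < μ.re
    · exact Submodule.mem_iSup_of_mem (⟨μ, hpos⟩ : {μ : ℂ // 0 < μ.re}) ((e.symm x) μ).2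
    · have : π μ x = 0 := hzero μ (le_of_not_gt hpos)
      rw [hπ_apply] at this
      rw [this]
      exact Submodule.zero_mem _
  · -- easy direction
    intro hx
    set S : Submodule ℂ (Fin n → ℂ) :=
      { carrier := {v | Tendsto (fun t : ℝ => (NormedSpace.exp ((t : ℂ) • A)).mulVec v)
          atBot (nhds 0)}
        add_mem' := by
          intro a b ha hb
          have := ha.add hb
          rw [add_zero] at this
          refine this.congr fun t => ?_
          rw [Matrix.mulVec_add]
        zero_mem' := by
          have h0 : Tendsto (fun _ : ℝ => (0 : Fin n → ℂ)) atBot (nhds 0) := tendsto_const_nhds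
          exact h0.congr fun t => (Matrix.mulVec_zero _).symm
        smul_mem' := by
          intro c a ha
          have := ha.const_smul c
          rw [smul_zero] at this
          refine this.congr fun t => ?_
          rw [Matrix.mulVec_smul]  } with hS
    have hle : (⨆ lam : {μ : ℂ // 0 < μ.re}, E (lam : ℂ)) ≤ S := by
      refine iSup_le fun lam => ?_
      intro v hv
      exact tendsto_exp_mulVec_of_pos A lam.2 v ((hmem _ v).mp hv)
    exact hle hx
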